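/- Let n ≥ 2 be an integer. For every real polynomial f in two variables of total degree at most 2n−1, (1/π²) · ∫_{[−1,1]²} f(t₁,t₂) · (1−t₁²)^{−1/2} · (1−t₂²)^{−1/2} dt₁ dt₂ = (1/(2n²)) · Σ_{k ∈ Ξ_n} λ_k · f(cos(k₁π/n), cos(k₂π/n)). -/

import Mathlib

open MeasureTheory

attribute [local instance] Classical.propDecidable

/-- Ξ_n = {k : 0 ≤ k_i ≤ n, k1 ≡ k2 (mod 2)}. -/
noncomputable def Xi2 (n : ℕ) : Finset (ℤ × ℤ) :=
  (Finset.Icc ((0 : ℤ), (0 : ℤ)) ((n : ℤ), (n : ℤ))).filter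
    fun k => k.1 % 2 = k.2 % 2

/-- The cubature weight λ_k on Ξ_n. -/
noncomputable def lam2 (n : ℕ) (k : ℤ × ℤ) : ℝ :=
  if (0 < k.1 ∧ k.1 < (n : ℤ)) ∧ (0 < k.2 ∧ k.2 < (n : ℤ)) then 4
  else if (k.1 = 0 ∨ k.1 = (n : ℤ)) ∧ (k.2 = 0 ∨ k.2 = (n : ℤ)) then 1
  else 2

section Aux

open Finset


lemma complex_cos_pow (a : ℕ) (x : ℂ) :
    Complex.cos x ^ a * 2 ^ a =
      ∑ j ∈ Finset.range (a + 1), (a.choose j : ℂ) * Complex.cos ((2 * (j : ℂ) - a) * x) := by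
  have key : ∀ j ∈ Finset.range (a + 1),
      Complex.exp (x * Complex.I) ^ j * Complex.exp (-x * Complex.I) ^ (a - j)
        + Complex.exp (x * Complex.I) ^ (a - j) * Complex.exp (-x * Complex.I) ^ j
      = 2 * Complex.cos ((2 * (j : ℂ) - a) * x) := by
    intro j hj
    rw [Finset.mem_range] at hj
    have hja : (j : ℂ) + ((a - j : ℕ) : ℂ) = a := by
      push_cast [Nat.cast_sub (Nat.lt_succ_iff.mp hj)]; ring
    rw [← Complex.exp_nat_mul, ← Complex.exp_nat_mul, ← Complex.exp_nat_mul,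
      ← Complex.exp_nat_mul, ← Complex.exp_add, ← Complex.exp_add, Complex.cos]
    rw [show ((2 * (j:ℂ) - a) * x) * Complex.I
        = (j:ℂ) * (x * Complex.I) + ((a - j : ℕ):ℂ) * (-x * Complex.I) by
      rw [← hja]; ring]
    rw [show (-((2 * (j:ℂ) - a) * x)) * Complex.I
        = (j:ℂ) * (-x * Complex.I) + ((a - j : ℕ):ℂ) * (x * Complex.I) by
      rw [← hja]; ring]
    ring
  have h2 : Complex.cos x * 2 = Complex.exp (x * Complex.I) + Complex.exp (-x * Complex.I) := by
    rw [Complex.cos]; ring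
  calc Complex.cos x ^ a * 2 ^ a = (Complex.cos x * 2) ^ a := by rw [mul_pow]
    _ = (Complex.exp (x * Complex.I) + Complex.exp (-x * Complex.I)) ^ a := by rw [h2]
    _ = ∑ j ∈ Finset.range (a + 1),
          Complex.exp (x * Complex.I) ^ j * Complex.exp (-x * Complex.I) ^ (a - j)
            * (a.choose j : ℂ) := add_pow _ _ _
    _ = _ := by
      have hrefl : ∑ j ∈ Finset.range (a + 1),
            Complex.exp (x * Complex.I) ^ j * Complex.exp (-x * Complex.I) ^ (a - j)
              * (a.choose j : ℂ)
          = ∑ j ∈ Finset.range (a + 1),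
            Complex.exp (x * Complex.I) ^ (a - j) * Complex.exp (-x * Complex.I) ^ j
              * (a.choose j : ℂ) := by
        rw [← Finset.sum_range_reflect]
        apply Finset.sum_congr rfl
        intro j hj
        rw [Finset.mem_range] at hj
        have h1 : a - (a + 1 - 1 - j) = j := by omega
        have h2 : a + 1 - 1 - j = a - j := by omega
        rw [h1, h2, Nat.choose_symm (by omega)]
      rw [show ∑ j ∈ Finset.range (a + 1),
            Complex.exp (x * Complex.I) ^ j * Complex.exp (-x * Complex.I) ^ (a - j)
              * (a.choose j : ℂ)
          = (∑ j ∈ Finset.range (a + 1),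
              Complex.exp (x * Complex.I) ^ j * Complex.exp (-x * Complex.I) ^ (a - j)
                * (a.choose j : ℂ)
            + ∑ j ∈ Finset.range (a + 1),
              Complex.exp (x * Complex.I) ^ (a - j) * Complex.exp (-x * Complex.I) ^ j
                * (a.choose j : ℂ)) / 2 by rw [← hrefl]; ring]
      rw [← Finset.sum_add_distrib, Finset.sum_div]
      apply Finset.sum_congr rfl
      intro j hj
      rw [show Complex.exp (x * Complex.I) ^ j * Complex.exp (-x * Complex.I) ^ (a - j)
            * (a.choose j : ℂ)
          + Complex.exp (x * Complex.I) ^ (a - j) * Complex.exp (-x * Complex.I) ^ j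
            * (a.choose j : ℂ)
        = (Complex.exp (x * Complex.I) ^ j * Complex.exp (-x * Complex.I) ^ (a - j)
          + Complex.exp (x * Complex.I) ^ (a - j) * Complex.exp (-x * Complex.I) ^ j)
            * (a.choose j : ℂ) by ring]
      rw [key j hj]
      ring

lemma real_cos_pow (a : ℕ) (x : ℝ) :
    Real.cos x ^ a =
      (∑ j ∈ Finset.range (a + 1),
        (a.choose j : ℝ) * Real.cos ((((2 * j : ℤ) - a : ℤ) : ℝ) * x)) / 2 ^ a := by
  rw [eq_div_iff (by positivity : (2:ℝ)^a ≠ 0)]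
  have := complex_cos_pow a (x : ℂ)
  apply Complex.ofReal_injective
  push_cast [Complex.ofReal_cos]
  convert this using 2


noncomputable def MM (a : ℕ) : ℝ :=
  (∑ j ∈ Finset.range (a + 1), if 2 * j = a then (a.choose j : ℝ) else 0) / 2 ^ a

lemma integral_cos_int (m : ℤ) :
    ∫ x in (0:ℝ)..Real.pi, Real.cos ((m : ℝ) * x) = if m = 0 then Real.pi else 0 := by
  by_cases hm : m = 0
  · simp [hm]
  · rw [if_neg hm]
    have hc : (m : ℝ) ≠ 0 := Int.cast_ne_zero.mpr hm
    rw [intervalIntegral.integral_comp_mul_left Real.cos hc]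
    simp [Real.sin_int_mul_pi]


lemma integral_cos_pow_eq (a : ℕ) :
    ∫ x in (0:ℝ)..Real.pi, Real.cos x ^ a = Real.pi * MM a := by
  simp only [real_cos_pow a]
  rw [intervalIntegral.integral_div]
  rw [intervalIntegral.integral_finset_sum (fun j _ => by
    apply Continuous.intervalIntegrable
    exact continuous_const.mul (Real.continuous_cos.comp (continuous_const.mul continuous_id)))]
  have : ∀ j ∈ Finset.range (a + 1),
      ∫ x in (0:ℝ)..Real.pi, (a.choose j : ℝ) * Real.cos ((((2 * j : ℤ) - a : ℤ) : ℝ) * x)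
        = if 2 * j = a then (a.choose j : ℝ) * Real.pi else 0 := by
    intro j _
    rw [intervalIntegral.integral_const_mul, integral_cos_int]
    by_cases h : 2 * j = a
    · rw [if_pos (by omega : (2 * (j:ℤ) - a : ℤ) = 0), if_pos h]
    · rw [if_neg (by omega : ¬ (2 * (j:ℤ) - a : ℤ) = 0), if_neg h, mul_zero]
  rw [Finset.sum_congr rfl this, MM, mul_div_assoc', Finset.mul_sum]
  congr 1
  apply Finset.sum_congr rfl
  intro j _
  split_ifs <;> ring

lemma cos_image_Ioo : Real.cos '' Set.Ioo 0 Real.pi = Set.Ioo (-1 : ℝ) 1 := by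
  ext y
  constructor
  · rintro ⟨x, hx, rfl⟩
    constructor
    · calc (-1 : ℝ) = Real.cos Real.pi := Real.cos_pi.symm
        _ < Real.cos x := Real.strictAntiOn_cos ⟨hx.1.le, hx.2.le⟩
            ⟨Real.pi_pos.le, le_refl _⟩ hx.2
    · calc Real.cos x < Real.cos 0 := Real.strictAntiOn_cos ⟨le_refl _, Real.pi_pos.le⟩
            ⟨hx.1.le, hx.2.le⟩ hx.1
        _ = 1 := Real.cos_zero
  · intro hy
    exact ⟨Real.arccos y, ⟨Real.arccos_pos.mpr hy.2, lt_of_le_of_ne (Real.arccos_le_pi y) (fun h => by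
        have := Real.arccos_eq_pi.mp h; linarith [hy.1])⟩,
      Real.cos_arccos hy.1.le hy.2.le⟩

lemma pointwise_cov (a : ℕ) : ∀ x ∈ Set.Ioo 0 Real.pi,
    |(-Real.sin x)| • ((Real.cos x) ^ a * (Real.sqrt (1 - Real.cos x ^ 2))⁻¹)
      = Real.cos x ^ a := by
  intro x hx
  have hs : 0 < Real.sin x := Real.sin_pos_of_pos_of_lt_pi hx.1 hx.2
  have h1 : Real.sqrt (1 - Real.cos x ^ 2) = Real.sin x := by
    rw [← Real.sin_sq x, Real.sqrt_sq hs.le]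
  rw [h1, abs_neg, abs_of_pos hs, smul_eq_mul]
  field_simp

lemma moment_lemma (a : ℕ) :
    IntegrableOn (fun t => t ^ a * (Real.sqrt (1 - t ^ 2))⁻¹) (Set.Icc (-1 : ℝ) 1) volume ∧
    ∫ t in Set.Icc (-1 : ℝ) 1, t ^ a * (Real.sqrt (1 - t ^ 2))⁻¹ = Real.pi * MM a := by
  have hder : ∀ x ∈ Set.Ioo (0:ℝ) Real.pi,
      HasDerivWithinAt Real.cos (-Real.sin x) (Set.Ioo 0 Real.pi) x :=
    fun x _ => (Real.hasDerivAt_cos x).hasDerivWithinAt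
  have hinj : Set.InjOn Real.cos (Set.Ioo 0 Real.pi) :=
    Real.injOn_cos.mono Set.Ioo_subset_Icc_self
  have hcont : IntegrableOn (fun x => Real.cos x ^ a) (Set.Ioo 0 Real.pi) volume :=
    ((Real.continuous_cos.pow a).integrableOn_Icc).mono_set Set.Ioo_subset_Icc_self
  constructor
  · rw [integrableOn_Icc_iff_integrableOn_Ioo, ← cos_image_Ioo,
      integrableOn_image_iff_integrableOn_abs_deriv_smul measurableSet_Ioo hder hinj]
    exact hcont.congr_fun (fun x hx => (pointwise_cov a x hx).symm) measurableSet_Ioo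
  · rw [MeasureTheory.integral_Icc_eq_integral_Ioo, ← cos_image_Ioo,
      integral_image_eq_integral_abs_deriv_smul measurableSet_Ioo hder hinj,
      setIntegral_congr_fun measurableSet_Ioo (pointwise_cov a),
      ← MeasureTheory.integral_Ioc_eq_integral_Ioo,
      ← intervalIntegral.integral_of_le Real.pi_pos.le]
    exact integral_cos_pow_eq a


lemma geomC (n : ℕ) (hn : 1 ≤ n) (z : ℂ) (hz : z ^ (2 * n) = 1) :
    ∑ i ∈ Finset.range (2 * n), z ^ i = if z = 1 then ((2 * n : ℕ) : ℂ) else 0 := by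
  by_cases h1 : z = 1
  · simp [h1]
  · rw [if_neg h1, geom_sum_eq h1, hz]
    simp

lemma exp_pow_re (θ : ℝ) (i : ℕ) : ((Complex.exp ((θ:ℂ) * Complex.I)) ^ i).re
    = Real.cos (i * θ) := by
  rw [← Complex.exp_nat_mul]
  rw [show (i : ℂ) * ((θ:ℂ) * Complex.I) = ((i * θ : ℝ) : ℂ) * Complex.I by push_cast; ring]
  exact Complex.exp_ofReal_mul_I_re _

lemma exp_eq_one_iff_dvd (n : ℕ) (hn : 1 ≤ n) (p : ℤ) :
    Complex.exp ((((p : ℝ) * Real.pi / n : ℝ) : ℂ) * Complex.I) = 1 ↔ (2 * (n:ℤ)) ∣ p := by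
  have hπ : Real.pi ≠ 0 := Real.pi_ne_zero
  have hnR : (n : ℝ) ≠ 0 := Nat.cast_ne_zero.mpr (by omega)
  rw [Complex.exp_eq_one_iff]
  constructor
  · rintro ⟨m, hm⟩
    rw [show ((m:ℂ)) * (2 * Real.pi * Complex.I) = (((m : ℝ) * (2 * Real.pi) : ℝ) : ℂ) * Complex.I
      by push_cast; ring] at hm
    have := mul_right_cancel₀ Complex.I_ne_zero hm
    have hr : (p : ℝ) * Real.pi / n = (m : ℝ) * (2 * Real.pi) := Complex.ofReal_inj.mp this
    field_simp at hr
    have h2 : (p : ℝ) * Real.pi = ((m : ℝ) * (2 * n)) * Real.pi := by rw [hr]; ring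
    have hpr := mul_right_cancel₀ hπ h2
    have hpz : p = m * (2 * n) := by exact_mod_cast hpr
    exact ⟨m, by rw [hpz]; ring⟩
  · rintro ⟨m, rfl⟩
    refine ⟨m, ?_⟩
    have hnC : (n : ℂ) ≠ 0 := Nat.cast_ne_zero.mpr (by omega)
    push_cast
    field_simp

lemma cos_nat_pi (i : ℕ) : Real.cos (i * Real.pi) = (-1 : ℝ) ^ i := by
  induction i with
  | zero => simp
  | succ k ih =>
    rw [show ((k+1 : ℕ) : ℝ) * Real.pi = k * Real.pi + Real.pi by push_cast; ring]
    rw [Real.cos_add, Real.cos_pi, Real.sin_pi, pow_succ, ih]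
    ring

lemma geom1 (n : ℕ) (hn : 1 ≤ n) (p : ℤ) :
    ∑ i ∈ Finset.range (2 * n), Real.cos (i * ((p : ℝ) * Real.pi / n))
      = if (2 * (n:ℤ)) ∣ p then ((2 * n : ℕ) : ℝ) else 0 := by
  have hnC : (n : ℂ) ≠ 0 := Nat.cast_ne_zero.mpr (by omega)
  set θ : ℝ := (p : ℝ) * Real.pi / n with hθ
  set z : ℂ := Complex.exp ((θ : ℂ) * Complex.I) with hzdef
  have hz : z ^ (2 * n) = 1 := by
    rw [hzdef, ← Complex.exp_nat_mul]
    rw [show ((2 * n : ℕ) : ℂ) * ((θ : ℂ) * Complex.I) = (p : ℂ) * (2 * Real.pi * Complex.I) by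
      rw [hθ]; push_cast; field_simp]
    exact Complex.exp_int_mul_two_pi_mul_I p
  have key := congrArg Complex.re (geomC n hn z hz)
  rw [Complex.re_sum] at key
  have hre : ∀ i ∈ Finset.range (2 * n), (z ^ i).re = Real.cos (i * θ) :=
    fun i _ => exp_pow_re θ i
  rw [Finset.sum_congr rfl hre] at key
  rw [key]
  by_cases hd : (2 * (n:ℤ)) ∣ p
  · rw [if_pos hd, if_pos ((exp_eq_one_iff_dvd n hn p).mpr hd)]
    simp
  · rw [if_neg hd, if_neg (fun h => hd ((exp_eq_one_iff_dvd n hn p).mp h))]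
    simp

lemma geom2 (n : ℕ) (hn : 1 ≤ n) (p : ℤ) (hnd : ¬ (2 * (n:ℤ)) ∣ (p - n)) :
    ∑ i ∈ Finset.range (2 * n), (-1 : ℝ) ^ i * Real.cos (i * ((p : ℝ) * Real.pi / n)) = 0 := by
  have hnR : (n : ℝ) ≠ 0 := Nat.cast_ne_zero.mpr (by omega)
  have hpt : ∀ i ∈ Finset.range (2 * n),
      (-1 : ℝ) ^ i * Real.cos (i * ((p : ℝ) * Real.pi / n))
        = Real.cos (i * ((((p - n : ℤ)) : ℝ) * Real.pi / n)) := by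
    intro i _
    rw [show (i : ℝ) * ((((p - n : ℤ)) : ℝ) * Real.pi / n)
        = i * ((p : ℝ) * Real.pi / n) - i * Real.pi by push_cast; field_simp]
    rw [Real.cos_sub, Real.sin_nat_mul_pi, cos_nat_pi]
    ring
  rw [Finset.sum_congr rfl hpt, geom1 n hn (p - n), if_neg hnd]

noncomputable def ww (n i : ℕ) : ℝ := if i = 0 ∨ i = n then 1 else 2

lemma foldSum (n : ℕ) (hn : 1 ≤ n) (h : ℕ → ℝ)
    (hsym : ∀ m, 1 ≤ m → m ≤ n - 1 → h (2 * n - m) = h m) :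
    ∑ i ∈ Finset.range (n + 1), ww n i * h i = ∑ i ∈ Finset.range (2 * n), h i := by
  have hsplit : ∑ i ∈ Finset.range (2 * n), h i
      = ∑ i ∈ Finset.Ico 0 (n + 1), h i + ∑ i ∈ Finset.Ico (n + 1) (2 * n), h i := by
    rw [Finset.sum_Ico_consecutive h (by omega) (by omega), Finset.range_eq_Ico]
  have hrefl : ∑ i ∈ Finset.Ico (n + 1) (2 * n), h i = ∑ m ∈ Finset.Ico 1 n, h m := by
    refine Finset.sum_nbij' (fun i => 2 * n - i) (fun m => 2 * n - m) ?_ ?_ ?_ ?_ ?_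
    · intro a ha; simp only [Finset.mem_Ico] at ha ⊢; omega
    · intro a ha; simp only [Finset.mem_Ico] at ha ⊢; omega
    · intro a ha; simp only [Finset.mem_Ico] at ha; omega
    · intro a ha; simp only [Finset.mem_Ico] at ha; omega
    · intro a ha
      rw [Finset.mem_Ico] at ha
      rw [← hsym (2 * n - a) (by omega) (by omega)]
      congr 1
      omega
  have hlhs : ∑ i ∈ Finset.range (n + 1), ww n i * h i
      = ∑ i ∈ Finset.range (n + 1), h i
        + ∑ i ∈ Finset.range (n + 1), (if i = 0 ∨ i = n then 0 else h i) := by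
    rw [← Finset.sum_add_distrib]
    apply Finset.sum_congr rfl
    intro i _
    rw [ww]
    split_ifs <;> ring
  have hfil : ∑ i ∈ Finset.range (n + 1), (if i = 0 ∨ i = n then 0 else h i)
      = ∑ m ∈ Finset.Ico 1 n, h m := by
    rw [Finset.sum_congr rfl (fun i _ => (ite_not _ (h i) 0).symm), ← Finset.sum_filter]
    congr 1
    ext i
    simp only [Finset.mem_filter, Finset.mem_range, Finset.mem_Ico]
    omega
  rw [hlhs, hfil, hsplit, hrefl, Finset.range_eq_Ico]

lemma cos_sym (n : ℕ) (hn : 1 ≤ n) (p : ℤ) (m : ℕ) (hm : m ≤ 2 * n) :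
    Real.cos ((2 * n - m : ℕ) * ((p : ℝ) * Real.pi / n)) =
      Real.cos (m * ((p : ℝ) * Real.pi / n)) := by
  have hnR : (n : ℝ) ≠ 0 := Nat.cast_ne_zero.mpr (by omega)
  rw [show ((2 * n - m : ℕ) : ℝ) * ((p : ℝ) * Real.pi / n)
      = (p : ℝ) * (2 * Real.pi) - m * ((p : ℝ) * Real.pi / n) by
    push_cast [Nat.cast_sub hm]; field_simp]
  exact Real.cos_int_mul_two_pi_sub _ p

lemma negpow_sym (m k : ℕ) (hm : m ≤ k) (h2 : Even k) : (-1 : ℝ) ^ (k - m) = (-1 : ℝ) ^ m := by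
  have h : (-1 : ℝ) ^ (k - m) * (-1 : ℝ) ^ m = 1 := by
    rw [← pow_add, show k - m + m = k by omega, h2.neg_one_pow]
  rcases neg_one_pow_eq_or ℝ m with hh | hh <;>
    rcases neg_one_pow_eq_or ℝ (k - m) with gg | gg <;>
      rw [hh, gg] <;> rw [hh, gg] at h <;> norm_num at h

lemma oneD1 (n : ℕ) (hn : 1 ≤ n) (p : ℤ) (hp : |p| < 2 * n) :
    ∑ i ∈ Finset.range (n + 1), ww n i * Real.cos (i * ((p : ℝ) * Real.pi / n))
      = if p = 0 then 2 * (n : ℝ) else 0 := by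
  rw [foldSum n hn _ (fun m h1 h2 => cos_sym n hn p m (by omega)), geom1 n hn p]
  by_cases hp0 : p = 0
  · rw [if_pos (by rw [hp0]; exact dvd_zero _), if_pos hp0]; push_cast; ring
  · rw [if_neg ?_, if_neg hp0]
    intro hd
    have h1 : (2 * (n:ℤ)) ≤ |p| := Int.le_of_dvd (abs_pos.mpr hp0) ((dvd_abs _ _).mpr hd)
    omega

lemma oneD2 (n : ℕ) (hn : 1 ≤ n) (p : ℤ) (hnd : ¬ (2 * (n:ℤ)) ∣ (p - n)) :
    ∑ i ∈ Finset.range (n + 1),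
      ww n i * ((-1 : ℝ) ^ i * Real.cos (i * ((p : ℝ) * Real.pi / n))) = 0 := by
  rw [foldSum n hn _ (fun m h1 h2 => by
    rw [cos_sym n hn p m (by omega), negpow_sym m (2 * n) (by omega) (even_two_mul n)])]
  exact geom2 n hn p hnd

noncomputable def grid (n : ℕ) : Finset (ℕ × ℕ) :=
  (Finset.range (n + 1) ×ˢ Finset.range (n + 1)).filter (fun ij => ij.1 % 2 = ij.2 % 2)

lemma Slem (n : ℕ) (hn : 1 ≤ n) (p q : ℤ) (h : |p| + |q| < 2 * n) :
    ∑ ij ∈ grid n, ww n ij.1 * ww n ij.2 *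
        (Real.cos (ij.1 * ((p : ℝ) * Real.pi / n)) * Real.cos (ij.2 * ((q : ℝ) * Real.pi / n)))
      = if p = 0 ∧ q = 0 then 2 * (n : ℝ) ^ 2 else 0 := by
  have hp2 : |p| < 2 * (n : ℤ) := by have := abs_nonneg q; linarith
  have hq2 : |q| < 2 * (n : ℤ) := by have := abs_nonneg p; linarith
  rw [grid, Finset.sum_filter]
  have hpt : ∀ ij ∈ Finset.range (n + 1) ×ˢ Finset.range (n + 1),
      (if ij.1 % 2 = ij.2 % 2 then ww n ij.1 * ww n ij.2 *
          (Real.cos (ij.1 * ((p : ℝ) * Real.pi / n)) * Real.cos (ij.2 * ((q : ℝ) * Real.pi / n)))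
        else 0)
      = ((ww n ij.1 * Real.cos (ij.1 * ((p : ℝ) * Real.pi / n)))
          * (ww n ij.2 * Real.cos (ij.2 * ((q : ℝ) * Real.pi / n)))
        + (ww n ij.1 * ((-1:ℝ) ^ ij.1 * Real.cos (ij.1 * ((p : ℝ) * Real.pi / n))))
          * (ww n ij.2 * ((-1:ℝ) ^ ij.2 * Real.cos (ij.2 * ((q : ℝ) * Real.pi / n))))) / 2 := by
    intro ij _
    have hsgn : (-1:ℝ) ^ ij.1 * (-1:ℝ) ^ ij.2 = if ij.1 % 2 = ij.2 % 2 then 1 else -1 := by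
      rcases Nat.even_or_odd ij.1 with h1 | h1 <;> rcases Nat.even_or_odd ij.2 with h2 | h2
      · rw [h1.neg_one_pow, h2.neg_one_pow, if_pos (by
          have := Nat.even_iff.mp h1; have := Nat.even_iff.mp h2; omega)]; norm_num
      · rw [h1.neg_one_pow, h2.neg_one_pow, if_neg (by
          have := Nat.even_iff.mp h1; have := Nat.odd_iff.mp h2; omega)]; norm_num
      · rw [h1.neg_one_pow, h2.neg_one_pow, if_neg (by
          have := Nat.odd_iff.mp h1; have := Nat.even_iff.mp h2; omega)]; norm_num
      · rw [h1.neg_one_pow, h2.neg_one_pow,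
          if_pos (by have := Nat.odd_iff.mp h1; have := Nat.odd_iff.mp h2; omega)]; norm_num
    have hre : (ww n ij.1 * ((-1:ℝ) ^ ij.1 * Real.cos (ij.1 * ((p : ℝ) * Real.pi / n))))
          * (ww n ij.2 * ((-1:ℝ) ^ ij.2 * Real.cos (ij.2 * ((q : ℝ) * Real.pi / n))))
        = ((-1:ℝ) ^ ij.1 * (-1:ℝ) ^ ij.2) *
          (ww n ij.1 * ww n ij.2 *
            (Real.cos (ij.1 * ((p : ℝ) * Real.pi / n))
              * Real.cos (ij.2 * ((q : ℝ) * Real.pi / n)))) := by ring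
    rw [hre, hsgn]
    by_cases hpar : ij.1 % 2 = ij.2 % 2
    · rw [if_pos hpar, if_pos hpar]; ring
    · rw [if_neg hpar, if_neg hpar]; ring
  rw [Finset.sum_congr rfl hpt, ← Finset.sum_div, Finset.sum_add_distrib]
  rw [Finset.sum_product' (f := fun i j => (ww n i * Real.cos (i * ((p : ℝ) * Real.pi / n)))
        * (ww n j * Real.cos (j * ((q : ℝ) * Real.pi / n))))]
  rw [Finset.sum_product' (f := fun i j =>
        (ww n i * ((-1:ℝ) ^ i * Real.cos (i * ((p : ℝ) * Real.pi / n))))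
        * (ww n j * ((-1:ℝ) ^ j * Real.cos (j * ((q : ℝ) * Real.pi / n)))))]
  rw [← Finset.sum_mul_sum, ← Finset.sum_mul_sum]
  rw [oneD1 n hn p hp2, oneD1 n hn q hq2]
  have habs : ¬ ((2 * (n:ℤ)) ∣ (p - n)) ∨ ¬ ((2 * (n:ℤ)) ∣ (q - n)) := by
    by_contra hcon
    push_neg at hcon
    obtain ⟨⟨k, hk⟩, ⟨l, hl⟩⟩ := hcon
    have hpe : p = (n:ℤ) * (2 * k + 1) := by linarith
    have hqe : q = (n:ℤ) * (2 * l + 1) := by linarith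
    have h1 : (n:ℤ) ≤ |p| := by
      rw [hpe, abs_mul, abs_of_nonneg (by positivity : (0:ℤ) ≤ (n:ℤ))]
      have : (1:ℤ) ≤ |2 * k + 1| := Int.one_le_abs (by omega)
      nlinarith [Int.ofNat_le.mpr hn]
    have h2 : (n:ℤ) ≤ |q| := by
      rw [hqe, abs_mul, abs_of_nonneg (by positivity : (0:ℤ) ≤ (n:ℤ))]
      have : (1:ℤ) ≤ |2 * l + 1| := Int.one_le_abs (by omega)
      nlinarith [Int.ofNat_le.mpr hn]
    linarith
  have hzero : (∑ i ∈ Finset.range (n + 1),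
        ww n i * ((-1:ℝ) ^ i * Real.cos (i * ((p : ℝ) * Real.pi / n))))
      * (∑ j ∈ Finset.range (n + 1),
        ww n j * ((-1:ℝ) ^ j * Real.cos (j * ((q : ℝ) * Real.pi / n)))) = 0 := by
    rcases habs with hd | hd
    · rw [oneD2 n hn p hd, zero_mul]
    · rw [oneD2 n hn q hd, mul_zero]
  rw [hzero]
  by_cases hp0 : p = 0 <;> by_cases hq0 : q = 0
  · rw [if_pos hp0, if_pos hq0, if_pos ⟨hp0, hq0⟩]; ring
  · rw [if_pos hp0, if_neg hq0, if_neg (by tauto)]; ring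
  · rw [if_neg hp0, if_pos hq0, if_neg (by tauto)]; ring
  · rw [if_neg hp0, if_neg hq0, if_neg (by tauto)]; ring



lemma MM_sum (a : ℕ) : MM a = ∑ u ∈ Finset.range (a + 1),
    (if 2 * u = a then (a.choose u : ℝ) else 0) / 2 ^ a := by
  rw [MM, Finset.sum_div]

lemma disc (n : ℕ) (hn : 1 ≤ n) (a b : ℕ) (hab : a + b < 2 * n) :
    ∑ ij ∈ grid n, ww n ij.1 * ww n ij.2 *
        (Real.cos (ij.1 * Real.pi / n) ^ a * Real.cos (ij.2 * Real.pi / n) ^ b)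
      = 2 * (n : ℝ) ^ 2 * (MM a * MM b) := by
  have key : ∀ ij ∈ grid n,
      ww n ij.1 * ww n ij.2 *
        (Real.cos (ij.1 * Real.pi / n) ^ a * Real.cos (ij.2 * Real.pi / n) ^ b)
      = ∑ u ∈ Finset.range (a+1), ∑ v ∈ Finset.range (b+1),
          ((a.choose u : ℝ) * (b.choose v : ℝ) / (2^a * 2^b)) *
            (ww n ij.1 * ww n ij.2 *
              (Real.cos (ij.1 * ((((2*u - a : ℤ)) : ℝ) * Real.pi / n))
                * Real.cos (ij.2 * ((((2*v - b : ℤ)) : ℝ) * Real.pi / n)))) := by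
    intro ij _
    rw [real_cos_pow a (ij.1 * Real.pi / n), real_cos_pow b (ij.2 * Real.pi / n)]
    rw [div_mul_div_comm, Finset.sum_mul_sum]
    rw [Finset.sum_div, Finset.mul_sum]
    refine Finset.sum_congr rfl ?_
    intro u _
    rw [Finset.sum_div, Finset.mul_sum]
    refine Finset.sum_congr rfl ?_
    intro v _
    rw [show (((2*(u:ℤ) - a : ℤ)) : ℝ) * ((ij.1:ℝ) * Real.pi / n)
        = ij.1 * ((((2*(u:ℤ) - a : ℤ)) : ℝ) * Real.pi / n) by ring,
      show (((2*(v:ℤ) - b : ℤ)) : ℝ) * ((ij.2:ℝ) * Real.pi / n)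
        = ij.2 * ((((2*(v:ℤ) - b : ℤ)) : ℝ) * Real.pi / n) by ring]
    ring
  rw [Finset.sum_congr rfl key, Finset.sum_comm,
    Finset.sum_congr rfl (fun u _ => Finset.sum_comm)]
  have inner : ∀ u ∈ Finset.range (a+1), ∀ v ∈ Finset.range (b+1),
      ∑ ij ∈ grid n,
        ((a.choose u : ℝ) * (b.choose v : ℝ) / (2^a * 2^b)) *
          (ww n ij.1 * ww n ij.2 *
            (Real.cos (ij.1 * ((((2*u - a : ℤ)) : ℝ) * Real.pi / n))
              * Real.cos (ij.2 * ((((2*v - b : ℤ)) : ℝ) * Real.pi / n))))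
      = 2 * (n : ℝ) ^ 2 *
          (((if 2 * u = a then (a.choose u : ℝ) else 0) / 2 ^ a)
            * ((if 2 * v = b then (b.choose v : ℝ) else 0) / 2 ^ b)) := by
    intro u hu v hv
    rw [Finset.mem_range] at hu hv
    rw [← Finset.mul_sum]
    have habs : |2*(u:ℤ) - a| + |2*(v:ℤ) - b| < 2 * (n:ℤ) := by
      have h1 : |2*(u:ℤ) - a| ≤ (a:ℤ) := abs_le.mpr ⟨by omega, by omega⟩
      have h2 : |2*(v:ℤ) - b| ≤ (b:ℤ) := abs_le.mpr ⟨by omega, by omega⟩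
      have h3 : (a:ℤ) + b < 2 * n := by exact_mod_cast hab
      linarith
    rw [Slem n hn (2*(u:ℤ) - a) (2*(v:ℤ) - b) habs]
    by_cases h1 : 2 * u = a <;> by_cases h2 : 2 * v = b
    · rw [if_pos ⟨by omega, by omega⟩, if_pos h1, if_pos h2]; ring
    · rw [if_neg (by omega : ¬(2*(u:ℤ) - a = 0 ∧ 2*(v:ℤ) - b = 0)), if_pos h1, if_neg h2]; ring
    · rw [if_neg (by omega : ¬(2*(u:ℤ) - a = 0 ∧ 2*(v:ℤ) - b = 0)), if_neg h1, if_pos h2]; ring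
    · rw [if_neg (by omega : ¬(2*(u:ℤ) - a = 0 ∧ 2*(v:ℤ) - b = 0)), if_neg h1, if_neg h2]; ring
  rw [Finset.sum_congr rfl (fun u hu => Finset.sum_congr rfl (inner u hu))]
  rw [MM_sum, MM_sum, Finset.sum_mul_sum, Finset.mul_sum]
  refine Finset.sum_congr rfl ?_
  intro u _
  rw [Finset.mul_sum]







lemma xi2_to_grid (n : ℕ) (G : ℤ × ℤ → ℝ) :
    ∑ k ∈ Xi2 n, G k = ∑ ij ∈ grid n, G ((ij.1 : ℤ), (ij.2 : ℤ)) := by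
  refine Finset.sum_nbij' (fun k => (k.1.toNat, k.2.toNat))
    (fun ij => ((ij.1 : ℤ), (ij.2 : ℤ))) ?_ ?_ ?_ ?_ ?_
  · intro k hk
    simp only [Xi2, Finset.mem_filter, Finset.mem_Icc, Prod.le_def] at hk
    simp only [grid, Finset.mem_filter, Finset.mem_product, Finset.mem_range]
    omega
  · intro ij hij
    simp only [grid, Finset.mem_filter, Finset.mem_product, Finset.mem_range] at hij
    simp only [Xi2, Finset.mem_filter, Finset.mem_Icc, Prod.le_def]
    omega
  · intro k hk
    simp only [Xi2, Finset.mem_filter, Finset.mem_Icc, Prod.le_def] at hk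
    have h1 : ((k.1.toNat : ℤ)) = k.1 := Int.toNat_of_nonneg hk.1.1.1
    have h2 : ((k.2.toNat : ℤ)) = k.2 := Int.toNat_of_nonneg hk.1.1.2
    simp only
    rw [h1, h2]
  · intro ij _
    simp only [Int.toNat_natCast]
  · intro k hk
    simp only [Xi2, Finset.mem_filter, Finset.mem_Icc, Prod.le_def] at hk
    congr 1
    have h1 : ((k.1.toNat : ℤ)) = k.1 := Int.toNat_of_nonneg hk.1.1.1
    have h2 : ((k.2.toNat : ℤ)) = k.2 := Int.toNat_of_nonneg hk.1.1.2
    simp only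
    rw [h1, h2]

lemma lam2_eq (n : ℕ) (i j : ℕ) (hi : i ≤ n) (hj : j ≤ n) :
    lam2 n ((i : ℤ), (j : ℤ)) = ww n i * ww n j := by
  rw [lam2, ww, ww]
  by_cases hi0 : i = 0 ∨ i = n <;> by_cases hj0 : j = 0 ∨ j = n
  · rw [if_neg (by omega), if_pos (by omega), if_pos hi0, if_pos hj0]
    norm_num
  · rw [if_neg (by omega), if_neg (by omega), if_pos hi0, if_neg hj0]; norm_num
  · rw [if_neg (by omega), if_neg (by omega), if_neg hi0, if_pos hj0]; norm_num
  · rw [if_pos (by omega), if_neg hi0, if_neg hj0]; norm_num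

end Aux

theorem gauss_type_cubature_first_kind_2d (n : ℕ) (hn : 2 ≤ n)
    (f : MvPolynomial (Fin 2) ℝ) (hf : f.totalDegree ≤ 2 * n - 1) :
    (1 / Real.pi ^ 2) *
        ∫ t in Set.Icc ((-(1:ℝ), -(1:ℝ))) (((1:ℝ), (1:ℝ))),
          (MvPolynomial.eval ![t.1, t.2] f) *
            ((Real.sqrt (1 - t.1 ^ 2))⁻¹ * (Real.sqrt (1 - t.2 ^ 2))⁻¹)
      = (1 / (2 * (n : ℝ) ^ 2)) *
          ∑ k ∈ Xi2 n, lam2 n k *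
            MvPolynomial.eval
              ![Real.cos (k.1 * Real.pi / n), Real.cos (k.2 * Real.pi / n)] f := by
  have hn1 : 1 ≤ n := by omega
  have hnR : (n : ℝ) ≠ 0 := Nat.cast_ne_zero.mpr (by omega)
  have hπ : Real.pi ≠ 0 := Real.pi_ne_zero
  have hdeg : ∀ d ∈ f.support, d 0 + d 1 < 2 * n := by
    intro d hd
    have h1 : (d.sum fun _ e => e) ≤ 2 * n - 1 :=
      le_trans (MvPolynomial.le_totalDegree hd) hf
    have h2 : (d.sum fun _ e => e) = d 0 + d 1 := by
      rw [Finsupp.sum_fintype _ _ (fun _ => rfl), Fin.sum_univ_two]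
    omega
  have heval : ∀ x y : ℝ, MvPolynomial.eval ![x, y] f
      = ∑ d ∈ f.support, MvPolynomial.coeff d f * (x ^ d 0 * y ^ d 1) := by
    intro x y
    rw [MvPolynomial.eval_eq']
    refine Finset.sum_congr rfl ?_
    intro d _
    rw [Fin.prod_univ_two]
    simp [Matrix.cons_val_zero, Matrix.cons_val_one, Matrix.head_cons]
  have hLHS : (1 / Real.pi ^ 2) *
        ∫ t in Set.Icc ((-(1:ℝ), -(1:ℝ))) (((1:ℝ), (1:ℝ))),
          (MvPolynomial.eval ![t.1, t.2] f) *
            ((Real.sqrt (1 - t.1 ^ 2))⁻¹ * (Real.sqrt (1 - t.2 ^ 2))⁻¹)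
      = ∑ d ∈ f.support, MvPolynomial.coeff d f * (MM (d 0) * MM (d 1)) := by
    rw [show Set.Icc ((-(1:ℝ), -(1:ℝ))) (((1:ℝ), (1:ℝ)))
        = Set.Icc (-(1:ℝ)) 1 ×ˢ Set.Icc (-(1:ℝ)) 1 from Set.Icc_prod_eq _ _]
    have hfun : (fun t : ℝ × ℝ => (MvPolynomial.eval ![t.1, t.2] f) *
          ((Real.sqrt (1 - t.1 ^ 2))⁻¹ * (Real.sqrt (1 - t.2 ^ 2))⁻¹))
        = fun t : ℝ × ℝ => ∑ d ∈ f.support, MvPolynomial.coeff d f *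
            ((t.1 ^ d 0 * (Real.sqrt (1 - t.1 ^ 2))⁻¹)
              * (t.2 ^ d 1 * (Real.sqrt (1 - t.2 ^ 2))⁻¹)) := by
      funext t
      rw [heval t.1 t.2, Finset.sum_mul]
      refine Finset.sum_congr rfl ?_
      intro d _
      ring
    rw [hfun]
    have hintg : ∀ d ∈ f.support, Integrable
        (fun t : ℝ × ℝ => MvPolynomial.coeff d f *
          ((t.1 ^ d 0 * (Real.sqrt (1 - t.1 ^ 2))⁻¹)
            * (t.2 ^ d 1 * (Real.sqrt (1 - t.2 ^ 2))⁻¹)))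
        (volume.restrict (Set.Icc (-(1:ℝ)) 1 ×ˢ Set.Icc (-(1:ℝ)) 1)) := by
      intro d _
      apply Integrable.const_mul
      rw [Measure.volume_eq_prod, ← Measure.prod_restrict]
      exact (moment_lemma (d 0)).1.mul_prod (moment_lemma (d 1)).1
    rw [integral_finset_sum f.support hintg, Finset.mul_sum]
    refine Finset.sum_congr rfl ?_
    intro d _
    rw [MeasureTheory.integral_const_mul, Measure.volume_eq_prod,
      MeasureTheory.setIntegral_prod_mul (fun x : ℝ => x ^ d 0 * (Real.sqrt (1 - x ^ 2))⁻¹)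
        (fun y : ℝ => y ^ d 1 * (Real.sqrt (1 - y ^ 2))⁻¹) (Set.Icc (-(1:ℝ)) 1)
        (Set.Icc (-(1:ℝ)) 1),
      (moment_lemma (d 0)).2, (moment_lemma (d 1)).2]
    field_simp
  have hRHS : ∑ k ∈ Xi2 n, lam2 n k *
        MvPolynomial.eval
          ![Real.cos (k.1 * Real.pi / n), Real.cos (k.2 * Real.pi / n)] f
      = 2 * (n : ℝ) ^ 2 * ∑ d ∈ f.support, MvPolynomial.coeff d f * (MM (d 0) * MM (d 1)) := by
    rw [xi2_to_grid n (fun k => lam2 n k *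
      MvPolynomial.eval ![Real.cos (k.1 * Real.pi / n), Real.cos (k.2 * Real.pi / n)] f)]
    have hpt : ∀ ij ∈ grid n,
        lam2 n ((ij.1 : ℤ), (ij.2 : ℤ)) *
          MvPolynomial.eval ![Real.cos (((ij.1 : ℤ) : ℝ) * Real.pi / n),
            Real.cos (((ij.2 : ℤ) : ℝ) * Real.pi / n)] f
        = ∑ d ∈ f.support, MvPolynomial.coeff d f *
            (ww n ij.1 * ww n ij.2 *
              (Real.cos ((ij.1 : ℝ) * Real.pi / n) ^ d 0
                * Real.cos ((ij.2 : ℝ) * Real.pi / n) ^ d 1)) := by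
      intro ij hij
      have hmem : ij.1 ≤ n ∧ ij.2 ≤ n := by
        simp only [grid, Finset.mem_filter, Finset.mem_product, Finset.mem_range] at hij
        omega
      rw [Int.cast_natCast, Int.cast_natCast, lam2_eq n ij.1 ij.2 hmem.1 hmem.2,
        heval, Finset.mul_sum]
      refine Finset.sum_congr rfl ?_
      intro d _
      ring
    rw [Finset.sum_congr rfl hpt, Finset.sum_comm, Finset.mul_sum]
    refine Finset.sum_congr rfl ?_
    intro d hd
    rw [← Finset.mul_sum, disc n hn1 (d 0) (d 1) (hdeg d hd)]
    ring
  rw [hLHS, hRHS]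
  field_simp
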